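/- Let Φ = K_{a,b}^φ (a, b ≥ 2) be a quaternion unit gain complete bipartite graph. Then the row left rank of A(Φ) equals 2 if and only if every induced 4-cycle C₄^φ in Φ has gain product equal to 1 (i.e., is of Type 1). -/

import Mathlib

/-- The row left rank of a quaternion matrix: the rank (dimension of the span, with
quaternion scalars acting on the left) of the set of rows of `A`. -/
noncomputable def rowLeftRank {m n : Type*} (A : Matrix m n (Quaternion ℝ)) : ℕ :=
  (Module.rank (Quaternion ℝ)
    (Submodule.span (Quaternion ℝ) (Set.range (fun i j => A i j)))).toNat

/-- The row right rank: scalars act on the right, i.e. over the opposite ring. -/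
noncomputable def rowRightRank {m n : Type*} (A : Matrix m n (Quaternion ℝ)) : ℕ :=
  (Module.rank (Quaternion ℝ)ᵐᵒᵖ
    (Submodule.span (Quaternion ℝ)ᵐᵒᵖ (Set.range (fun i j => A i j)))).toNat

/-- The column right rank: the span of the columns with scalars acting on the right. -/
noncomputable def colRightRank {m n : Type*} (A : Matrix m n (Quaternion ℝ)) : ℕ :=
  (Module.rank (Quaternion ℝ)ᵐᵒᵖ
    (Submodule.span (Quaternion ℝ)ᵐᵒᵖ (Set.range (fun j i => A i j)))).toNat

/-- A quaternion unit gain graph on vertex type `V`. -/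
structure QuaternionUnitGainGraph (V : Type*) where
  G : SimpleGraph V
  gain : V → V → Quaternion ℝ
  gain_unit : ∀ u v, G.Adj u v → ‖gain u v‖ = 1
  gain_inv : ∀ u v, G.Adj u v → gain v u = star (gain u v)
  gain_zero : ∀ u v, ¬ G.Adj u v → gain u v = 0

/-- The (Hermitian, quaternion) adjacency matrix of a quaternion unit gain graph. -/
def QuaternionUnitGainGraph.adjMatrix {V : Type*} (Φ : QuaternionUnitGainGraph V) :
    Matrix V V (Quaternion ℝ) := fun u v => Φ.gain u v

/-- The row left rank of a quaternion unit gain graph. -/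
noncomputable def QuaternionUnitGainGraph.rank {V : Type*} (Φ : QuaternionUnitGainGraph V) : ℕ :=
  rowLeftRank Φ.adjMatrix

section Helpers

lemma unit_star_mul {q : Quaternion ℝ} (h : ‖q‖ = 1) : star q * q = 1 := by
  have h2 : Quaternion.normSq q = 1 := by
    rw [Quaternion.normSq_eq_norm_mul_self, h, mul_one]
  rw [Quaternion.star_mul_self, h2]
  exact_mod_cast rfl

lemma unit_mul_star {q : Quaternion ℝ} (h : ‖q‖ = 1) : q * star q = 1 := by
  have h2 : Quaternion.normSq q = 1 := by
    rw [Quaternion.normSq_eq_norm_mul_self, h, mul_one]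
  rw [Quaternion.self_mul_star, h2]
  exact_mod_cast rfl

end Helpers

set_option maxHeartbeats 1000000 in
theorem gain_completeBipartite_rank_eq_two_iff {V₁ V₂ : Type*}
    [Fintype V₁] [Fintype V₂] (ha : 2 ≤ Fintype.card V₁) (hb : 2 ≤ Fintype.card V₂)
    (Φ : QuaternionUnitGainGraph (V₁ ⊕ V₂))
    (hG : Φ.G = completeBipartiteGraph V₁ V₂) :
    Φ.rank = 2 ↔
      ∀ (u₁ u₂ : V₁) (v₁ v₂ : V₂), u₁ ≠ u₂ → v₁ ≠ v₂ →
        Φ.gain (Sum.inl u₁) (Sum.inr v₁) * Φ.gain (Sum.inr v₁) (Sum.inl u₂) *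
          Φ.gain (Sum.inl u₂) (Sum.inr v₂) * Φ.gain (Sum.inr v₂) (Sum.inl u₁) = 1 := by
  classical
  have hadj : ∀ (u : V₁) (v : V₂), Φ.G.Adj (Sum.inl u) (Sum.inr v) := by
    intro u v; rw [hG]; simp [completeBipartiteGraph]
  set g : V₁ → V₂ → Quaternion ℝ := fun u v => Φ.gain (Sum.inl u) (Sum.inr v) with hgdef
  have hnorm : ∀ u v, ‖g u v‖ = 1 := fun u v => Φ.gain_unit _ _ (hadj u v)
  have hne : ∀ u v, g u v ≠ 0 := by
    intro u v h0
    have := hnorm u v; rw [h0] at this; simp at this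
  have hsg : ∀ u v, Φ.gain (Sum.inr v) (Sum.inl u) = star (g u v) :=
    fun u v => Φ.gain_inv _ _ (hadj u v)
  have hll : ∀ (u u' : V₁), Φ.gain (Sum.inl u) (Sum.inl u') = 0 := by
    intro u u'; apply Φ.gain_zero; rw [hG]; simp [completeBipartiteGraph]
  have hrr : ∀ (v v' : V₂), Φ.gain (Sum.inr v) (Sum.inr v') = 0 := by
    intro v v'; apply Φ.gain_zero; rw [hG]; simp [completeBipartiteGraph]
  have hstar_mul : ∀ u v, star (g u v) * g u v = 1 := fun u v => unit_star_mul (hnorm u v)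
  have hmul_star : ∀ u v, g u v * star (g u v) = 1 := fun u v => unit_mul_star (hnorm u v)
  set r : (V₁ ⊕ V₂) → ((V₁ ⊕ V₂) → Quaternion ℝ) := fun i j => Φ.adjMatrix i j with hrdef
  have hradj : ∀ i j, r i j = Φ.gain i j := fun i j => rfl
  have hrank : Φ.rank = (Module.rank (Quaternion ℝ)
      (Submodule.span (Quaternion ℝ) (Set.range r))).toNat := rfl
  constructor
  · intro h2 u₁ u₂ v₁ v₂ hu hv
    by_contra hc
    rw [hsg u₂ v₁, hsg u₁ v₂] at hc
    -- hc : ¬ (g u₁ v₁ * star (g u₂ v₁) * g u₂ v₂ * star (g u₁ v₂) = 1)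
    set w : Fin 3 → ((V₁ ⊕ V₂) → Quaternion ℝ) :=
      ![r (Sum.inl u₁), r (Sum.inl u₂), r (Sum.inr v₁)] with hw
    have hli : LinearIndependent (Quaternion ℝ) w := by
      rw [Fintype.linearIndependent_iff]
      intro c hsum
      have hval : ∀ j, c 0 * r (Sum.inl u₁) j + c 1 * r (Sum.inl u₂) j
          + c 2 * r (Sum.inr v₁) j = 0 := by
        intro j
        have := congrFun hsum j
        simpa [hw, Fin.sum_univ_three, Pi.smul_apply, smul_eq_mul, add_assoc] using this
      have hc2 : c 2 = 0 := by
        have e1 := hval (Sum.inl u₁)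
        simp only [hradj, hll, mul_zero, zero_add, hsg] at e1
        rcases mul_eq_zero.mp e1 with h | h
        · exact h
        · exact absurd h (by simpa using hne u₁ v₁)
      have e2 := hval (Sum.inr v₁)
      have e3 := hval (Sum.inr v₂)
      simp only [hradj, hrr, mul_zero, add_zero, hc2, zero_mul] at e2 e3
      have hc1 : c 1 = 0 := by
        by_contra hc1
        have f1 : c 0 = -(c 1 * (g u₂ v₁ * star (g u₁ v₁))) := by
          have f := congrArg (fun x => x * star (g u₁ v₁)) (eq_neg_of_add_eq_zero_left e2)
          simpa [show ∀ u v, Φ.gain (Sum.inl u) (Sum.inr v) = g u v from fun _ _ => rfl, mul_assoc, hmul_star u₁ v₁, neg_mul] using f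
        have f2 : c 0 = -(c 1 * (g u₂ v₂ * star (g u₁ v₂))) := by
          have f := congrArg (fun x => x * star (g u₁ v₂)) (eq_neg_of_add_eq_zero_left e3)
          simpa [show ∀ u v, Φ.gain (Sum.inl u) (Sum.inr v) = g u v from fun _ _ => rfl, mul_assoc, hmul_star u₁ v₂, neg_mul] using f
        have f3 : g u₂ v₁ * star (g u₁ v₁) = g u₂ v₂ * star (g u₁ v₂) :=
          mul_left_cancel₀ hc1 (neg_injective (f1.symm.trans f2))
        have f4 : g u₁ v₁ * star (g u₂ v₁) = g u₁ v₂ * star (g u₂ v₂) := by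
          have := congrArg star f3
          simpa [star_mul] using this
        apply hc
        rw [f4, mul_assoc (g u₁ v₂), hstar_mul u₂ v₂, mul_one, hmul_star u₁ v₂]
      have hc0 : c 0 = 0 := by
        rw [hc1, zero_mul, add_zero] at e2
        rcases mul_eq_zero.mp e2 with h | h
        · exact h
        · exact absurd h (hne u₁ v₁)
      intro i; fin_cases i <;> assumption
    have hsub : Submodule.span (Quaternion ℝ) (Set.range w)
        ≤ Submodule.span (Quaternion ℝ) (Set.range r) := by
      apply Submodule.span_mono
      rintro x ⟨i, rfl⟩
      fin_cases i <;> exact ⟨_, rfl⟩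
    have h3 : (3 : Cardinal) ≤ Module.rank (Quaternion ℝ)
        (Submodule.span (Quaternion ℝ) (Set.range r)) := by
      have hr3 := rank_span hli
      have hmk : Cardinal.mk (Set.range w) = 3 := by
        simpa using Cardinal.mk_range_eq_of_injective hli.injective
      calc (3 : Cardinal)
          = Module.rank (Quaternion ℝ) (Submodule.span (Quaternion ℝ) (Set.range w)) := by
            rw [hr3, hmk]
        _ ≤ _ := Submodule.rank_mono hsub
    have hfin : Module.rank (Quaternion ℝ)
        (Submodule.span (Quaternion ℝ) (Set.range r)) < Cardinal.aleph0 := by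
      have h1 := Submodule.rank_le (Submodule.span (Quaternion ℝ) (Set.range r))
      have hfun : Module.rank (Quaternion ℝ) ((V₁ ⊕ V₂) → Quaternion ℝ)
          = Fintype.card (V₁ ⊕ V₂) := rank_fun'
      exact lt_of_le_of_lt (h1.trans_eq hfun) (Cardinal.nat_lt_aleph0 _)
    have hle := Cardinal.toNat_le_toNat h3 hfin
    rw [hrank] at h2
    simp [h2] at hle
  · intro P
    obtain ⟨u₀⟩ : Nonempty V₁ := Fintype.card_pos_iff.mp (by omega)
    obtain ⟨v₀⟩ : Nonempty V₂ := Fintype.card_pos_iff.mp (by omega)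
    have key : ∀ (u : V₁) (v : V₂), g u v₀ * star (g u₀ v₀) * g u₀ v = g u v := by
      intro u v
      by_cases huu : u = u₀
      · subst huu; rw [hmul_star, one_mul]
      · by_cases hvv : v = v₀
        · subst hvv; rw [mul_assoc, hstar_mul, mul_one]
        · have hcyc := P u u₀ v₀ v huu (Ne.symm hvv)
          rw [hsg u₀ v₀, hsg u v] at hcyc
          have := congrArg (fun x => x * g u v) hcyc
          simpa [mul_assoc, hstar_mul u v] using this
    have key2 : ∀ (u : V₁) (v : V₂),
        star (g u₀ v) * g u₀ v₀ * star (g u v₀) = star (g u v) := by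
      intro u v
      have := congrArg star (key u v)
      simpa [star_mul, mul_assoc] using this
    set w : Fin 2 → ((V₁ ⊕ V₂) → Quaternion ℝ) :=
      ![r (Sum.inl u₀), r (Sum.inr v₀)] with hw
    have hw0 : w 0 = r (Sum.inl u₀) := rfl
    have hw1 : w 1 = r (Sum.inr v₀) := rfl
    have hmem : ∀ i, r i ∈ Submodule.span (Quaternion ℝ) (Set.range w) := by
      rintro (u | v)
      · have hx : r (Sum.inl u) = (g u v₀ * star (g u₀ v₀)) • r (Sum.inl u₀) := by
          funext j
          rcases j with u' | v'
          · simp only [Pi.smul_apply, smul_eq_mul, hradj, hll, mul_zero]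
          · simp only [Pi.smul_apply, smul_eq_mul, hradj]
            exact (key u v').symm
        rw [hx, ← hw0]
        exact Submodule.smul_mem _ _ (Submodule.subset_span ⟨0, rfl⟩)
      · have hx : r (Sum.inr v) = (star (g u₀ v) * g u₀ v₀) • r (Sum.inr v₀) := by
          funext j
          rcases j with u' | v'
          · simp only [Pi.smul_apply, smul_eq_mul, hradj, hsg]
            exact (key2 u' v).symm
          · simp only [Pi.smul_apply, smul_eq_mul, hradj, hrr, mul_zero]
        rw [hx, ← hw1]
        exact Submodule.smul_mem _ _ (Submodule.subset_span ⟨1, rfl⟩)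
    have hspan : Submodule.span (Quaternion ℝ) (Set.range r)
        = Submodule.span (Quaternion ℝ) (Set.range w) := by
      apply le_antisymm
      · rw [Submodule.span_le]; rintro x ⟨i, rfl⟩; exact hmem i
      · apply Submodule.span_mono; rintro x ⟨i, rfl⟩
        fin_cases i <;> exact ⟨_, rfl⟩
    have hli : LinearIndependent (Quaternion ℝ) w := by
      rw [Fintype.linearIndependent_iff]
      intro c hsum
      rw [Fin.sum_univ_two] at hsum
      have hval : ∀ j, c 0 * r (Sum.inl u₀) j + c 1 * r (Sum.inr v₀) j = 0 := by
        intro j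
        have := congrFun hsum j
        simpa [hw0, hw1, Pi.smul_apply, smul_eq_mul] using this
      have h0 : c 0 = 0 := by
        have e := hval (Sum.inr v₀)
        simp only [hradj, hrr, mul_zero, add_zero] at e
        rcases mul_eq_zero.mp e with h | h
        · exact h
        · exact absurd h (hne u₀ v₀)
      have h1 : c 1 = 0 := by
        have e := hval (Sum.inl u₀)
        simp only [hradj, hll, mul_zero, zero_add, hsg] at e
        rcases mul_eq_zero.mp e with h | h
        · exact h
        · exact absurd h (by simpa using hne u₀ v₀)
      intro i; fin_cases i <;> assumption
    have hmk : Cardinal.mk (Set.range w) = 2 := by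
      simpa using Cardinal.mk_range_eq_of_injective hli.injective
    rw [hrank, hspan, rank_span hli, hmk]
    simp
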